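/- In the symmetric quadratic-equation setup, it holds that inf over Q_0 ∈ ℝ^{d×r} with ‖Q_0‖_max = 1 of ‖Q_0L̄_1 − L̄_2Q_0‖_max is at least |λ_r| − 3rμ(τ + rκ) − ε. Moreover, if |λ_r| > κ·r·√μ, then L̄_1 is an invertible r×r matrix. -/

import Mathlib

open Matrix BigOperators

/-- Entrywise max norm: largest absolute value of an entry. -/
noncomputable def matMaxNorm {m n : Type*} [Fintype m] [Fintype n] (M : Matrix m n ℝ) : ℝ :=
  ⨆ i, ⨆ j, |M i j|

/-- Matrix ∞-norm: maximum absolute row sum. -/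
noncomputable def matInfNorm {m n : Type*} [Fintype m] [Fintype n] (M : Matrix m n ℝ) : ℝ :=
  ⨆ i, ∑ j, |M i j|

/-- Matrix 1-norm: maximum absolute column sum. -/
noncomputable def matOneNorm {m n : Type*} [Fintype m] [Fintype n] (M : Matrix m n ℝ) : ℝ :=
  ⨆ j, ∑ i, |M i j|

/-- Euclidean norm of a vector. -/
noncomputable def vec2Norm {n : Type*} [Fintype n] (x : n → ℝ) : ℝ :=
  Real.sqrt (∑ i, (x i) ^ 2)

/-- ℓ∞ norm of a vector. -/
noncomputable def vecSupNorm {n : Type*} [Fintype n] (x : n → ℝ) : ℝ :=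
  ⨆ i, |x i|

/-- Spectral norm (operator 2-norm) of a matrix. -/
noncomputable def matSpecNorm {m n : Type*} [Fintype m] [Fintype n] (M : Matrix m n ℝ) : ℝ :=
  sSup {c : ℝ | ∃ x : n → ℝ, vec2Norm x ≤ 1 ∧ c = vec2Norm (M.mulVec x)}

/-- Coherence of a d × r matrix with orthonormal columns. -/
noncomputable def matCoherence {d r : ℕ} (V : Matrix (Fin d) (Fin r) ℝ) : ℝ :=
  ((d : ℝ) / (r : ℝ)) * ⨆ i, ∑ j, (V i j) ^ 2

/-- Inverse of the positive semidefinite square root of a matrix (junk value otherwise). -/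
noncomputable def matInvSqrt {n : Type*} [Fintype n] [DecidableEq n] (S : Matrix n n ℝ) :
    Matrix n n ℝ :=
  letI := Classical.propDecidable
  if h : S.PosSemidef then
    (h.1.eigenvectorUnitary.1 * diagonal ((↑) ∘ Real.sqrt ∘ h.1.eigenvalues) *
      (star h.1.eigenvectorUnitary : Matrix n n ℝ))⁻¹ else 0

/-- Weighted max-norm for matrices with d₁ + d₂ rows. -/
noncomputable def wMaxNorm {d₁ d₂ : ℕ} {n : Type*} [Fintype n]
    (M : Matrix (Fin d₁ ⊕ Fin d₂) n ℝ) : ℝ :=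
  matMaxNorm (Matrix.of fun i j =>
    (Sum.elim (fun _ : Fin d₁ => Real.sqrt d₁) (fun _ : Fin d₂ => Real.sqrt d₂) i) * M i j)

/-- Huber loss with parameter α. -/
noncomputable def huberLoss (α x : ℝ) : ℝ := if |x| ≤ α then x ^ 2 else 2 * α * |x| - α ^ 2


lemma fin_le_ciSup {n : ℕ} (f : Fin n → ℝ) (i : Fin n) : f i ≤ ⨆ j, f j :=
  le_ciSup (Set.Finite.bddAbove (Set.finite_range f)) i

lemma sum_fin_split {r d : ℕ} (hrd : r ≤ d) (f : Fin d → ℝ) :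
    ∑ i, f i = (∑ k : Fin r, f (Fin.castLE hrd k)) +
      ∑ k : Fin (d - r), f ⟨r + (k : ℕ), by have := k.isLt; omega⟩ := by
  classical
  set g : ℕ → ℝ := fun i => if h : i < d then f ⟨i, h⟩ else 0 with hg
  have h1 : ∑ i : Fin d, f i = ∑ i ∈ Finset.range d, g i := by
    rw [← Fin.sum_univ_eq_sum_range]
    exact Finset.sum_congr rfl fun i _ => by simp [hg, i.isLt]
  have h2 : ∑ k : Fin r, f (Fin.castLE hrd k) = ∑ i ∈ Finset.range r, g i := by
    rw [← Fin.sum_univ_eq_sum_range]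
    refine Finset.sum_congr rfl fun k _ => ?_
    have hk : (k : ℕ) < d := lt_of_lt_of_le k.isLt hrd
    simp only [hg]
    rw [dif_pos hk]
    rfl
  have h3 : (∑ k : Fin (d - r), f ⟨r + (k : ℕ), by have := k.isLt; omega⟩)
      = ∑ i ∈ Finset.Ico r d, g i := by
    rw [Finset.sum_Ico_eq_sum_range, ← Fin.sum_univ_eq_sum_range]
    refine Finset.sum_congr rfl fun k _ => ?_
    have hk : r + (k : ℕ) < d := by have := k.isLt; omega
    simp only [hg]
    rw [dif_pos hk]
  rw [h1, h2, h3, Finset.range_eq_Ico, ← Finset.sum_Ico_consecutive g (Nat.zero_le r) hrd,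
    ← Finset.range_eq_Ico]

lemma rowsum_bound {n : Type*} [Fintype n] (f g : n → ℝ) (C D : ℝ)
    (hC : ∑ b, |f b| ≤ C) (hD : ∀ b, |g b| ≤ D) (hD0 : 0 ≤ D) :
    |∑ b, f b * g b| ≤ C * D := by
  calc |∑ b, f b * g b| ≤ ∑ b, |f b * g b| := Finset.abs_sum_le_sum_abs _ _
    _ = ∑ b, |f b| * |g b| := by simp [abs_mul]
    _ ≤ ∑ b, |f b| * D :=
        Finset.sum_le_sum fun b _ => mul_le_mul_of_nonneg_left (hD b) (abs_nonneg _)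
    _ = (∑ b, |f b|) * D := by rw [Finset.sum_mul]
    _ ≤ C * D := mul_le_mul_of_nonneg_right hC hD0

set_option maxHeartbeats 2000000 in
/-- Lower bound for the linear operator Q₀ ↦ Q₀L̄₁ − L̄₂Q₀ in max-norm, and
invertibility of L̄₁ (Lemma A.2 of Fan–Wang–Zhong). -/
theorem linear_operator_lower_bound
    (d r : ℕ) (hr : 0 < r) (hrd : r ≤ d)
    (A E : Matrix (Fin d) (Fin d) ℝ)
    (hAsymm : Aᵀ = A) (hEsymm : Eᵀ = E)
    (lam : Fin d → ℝ) (v : Fin d → Fin d → ℝ)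
    (heig : ∀ i, A.mulVec (v i) = lam i • v i)
    (hon : ∀ i j, ∑ k, v i k * v j k = if i = j then (1 : ℝ) else 0)
    (hdec : ∀ i j : Fin d, i ≤ j → |lam j| ≤ |lam i|)
    (V : Matrix (Fin d) (Fin r) ℝ)
    (hV : V = Matrix.of fun a k => v (Fin.castLE hrd k) a)
    (Vp : Matrix (Fin d) (Fin (d - r)) ℝ)
    (hVp : Vp = Matrix.of fun (a : Fin d) (k : Fin (d - r)) => v ⟨r + (k : ℕ), by have := k.isLt; omega⟩ a)
    (Lam₁ : Matrix (Fin r) (Fin r) ℝ)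
    (hLam₁ : Lam₁ = Matrix.diagonal fun i => lam (Fin.castLE hrd i))
    (Lam₂ : Matrix (Fin (d - r)) (Fin (d - r)) ℝ)
    (hLam₂ : Lam₂ = Matrix.diagonal fun k : Fin (d - r) =>
      lam ⟨r + (k : ℕ), by have := k.isLt; omega⟩)
    (Ar : Matrix (Fin d) (Fin d) ℝ)
    (hAr : Ar = Matrix.of fun a b => ∑ k : Fin r,
      lam (Fin.castLE hrd k) * v (Fin.castLE hrd k) a * v (Fin.castLE hrd k) b)
    (eps tau kappa mu : ℝ)
    (heps : eps = matInfNorm (A - Ar))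
    (htau : tau = matInfNorm E)
    (hkappa : kappa = Real.sqrt d * matMaxNorm (E * V))
    (hmu : mu = matCoherence V)
    (H : Matrix (Fin d) (Fin r) ℝ) (hH : H = Vp * (Vpᵀ * E * V))
    (L₁ : Matrix (Fin r) (Fin r) ℝ) (hL₁ : L₁ = Lam₁ + Vᵀ * E * V)
    (L₂ : Matrix (Fin d) (Fin d) ℝ) (hL₂ : L₂ = Vp * (Lam₂ + Vpᵀ * E * Vp) * Vpᵀ)
    : (∀ Q₀ : Matrix (Fin d) (Fin r) ℝ, matMaxNorm Q₀ = 1 →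
        |lam (Fin.castLE hrd ⟨r - 1, by omega⟩)| - 3 * (r : ℝ) * mu * (tau + (r : ℝ) * kappa)
          - eps ≤ matMaxNorm (Q₀ * L₁ - L₂ * Q₀)) ∧
      (kappa * (r : ℝ) * Real.sqrt mu < |lam (Fin.castLE hrd ⟨r - 1, by omega⟩)| →
        IsUnit L₁.det) := by
  classical
  have hd : 0 < d := lt_of_lt_of_le hr hrd
  haveI : Nonempty (Fin d) := ⟨⟨0, hd⟩⟩
  haveI : Nonempty (Fin r) := ⟨⟨0, hr⟩⟩
  have hr0 : (0:ℝ) < r := Nat.cast_pos.mpr hr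
  have hd0 : (0:ℝ) < d := Nat.cast_pos.mpr hd
  subst hV hVp hLam₁ hLam₂ hAr hL₁ hL₂ hH heps htau hkappa hmu
  set V : Matrix (Fin d) (Fin r) ℝ :=
    Matrix.of fun a k => v (Fin.castLE hrd k) a with hV
  set Vp : Matrix (Fin d) (Fin (d - r)) ℝ :=
    Matrix.of fun (a : Fin d) (k : Fin (d - r)) =>
      v ⟨r + (k : ℕ), by have := k.isLt; omega⟩ a with hVp
  set Lam₁ : Matrix (Fin r) (Fin r) ℝ :=
    Matrix.diagonal (fun i => lam (Fin.castLE hrd i)) with hLam₁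
  set Lam₂ : Matrix (Fin (d - r)) (Fin (d - r)) ℝ :=
    Matrix.diagonal (fun k : Fin (d - r) =>
      lam ⟨r + (k : ℕ), by have := k.isLt; omega⟩) with hLam₂
  set Ar : Matrix (Fin d) (Fin d) ℝ :=
    Matrix.of (fun a b => ∑ k : Fin r,
      lam (Fin.castLE hrd k) * v (Fin.castLE hrd k) a * v (Fin.castLE hrd k) b) with hAr
  set tau : ℝ := matInfNorm E with htau
  set eps : ℝ := matInfNorm (A - Ar) with heps
  set mEV : ℝ := matMaxNorm (E * V) with hmEV
  set kappa : ℝ := Real.sqrt d * mEV with hkappa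
  set mu : ℝ := matCoherence V with hmu
  -- column orthonormality of the eigenvector matrix
  set W : Matrix (Fin d) (Fin d) ℝ := Matrix.of (fun i k => v i k) with hW
  have hWWt : W * Wᵀ = 1 := by
    ext i j
    simp [hW, Matrix.mul_apply, Matrix.one_apply, hon i j]
  have hWtW : Wᵀ * W = 1 := mul_eq_one_comm.mp hWWt
  have hcol : ∀ a b, ∑ i, v i a * v i b = if a = b then (1:ℝ) else 0 := by
    intro a b
    have h := congrFun (congrFun hWtW a) b
    simpa [hW, Matrix.mul_apply, Matrix.one_apply] using h
  -- eigen-decomposition of A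
  have hAdecomp : ∀ a b, A a b = ∑ i, lam i * (v i a * v i b) := by
    intro a b
    have h1 : ∀ i : Fin d, lam i * v i a = ∑ c, A a c * v i c := by
      intro i
      have h := congrFun (heig i) a
      simpa [Matrix.mulVec, dotProduct] using h.symm
    calc A a b = ∑ c, A a c * (if c = b then (1:ℝ) else 0) := by simp
      _ = ∑ c, A a c * ∑ i, v i c * v i b := by
          refine Finset.sum_congr rfl fun c _ => ?_; rw [hcol c b]
      _ = ∑ c, ∑ i, A a c * (v i c * v i b) := by
          refine Finset.sum_congr rfl fun c _ => ?_; rw [Finset.mul_sum]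
      _ = ∑ i, ∑ c, A a c * (v i c * v i b) := Finset.sum_comm
      _ = ∑ i, lam i * (v i a * v i b) := by
          refine Finset.sum_congr rfl fun i _ => ?_
          have h2 : ∑ c, A a c * (v i c * v i b) = (∑ c, A a c * v i c) * v i b := by
            rw [Finset.sum_mul]; exact Finset.sum_congr rfl fun c _ => by ring
          rw [h2, ← h1 i]; ring
  -- key matrix identities
  have hVpVp : Vp * Vpᵀ = 1 - V * Vᵀ := by
    ext a b
    have hs := sum_fin_split hrd (fun i => v i a * v i b)
    rw [hcol a b] at hs
    have e1 : ∑ k : Fin r, V a k * Vᵀ k b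
        = ∑ k : Fin r, (fun i => v i a * v i b) (Fin.castLE hrd k) :=
      Finset.sum_congr rfl fun k _ => rfl
    have e2 : ∑ k : Fin (d - r), Vp a k * Vpᵀ k b
        = ∑ k : Fin (d - r), (fun i => v i a * v i b)
            ⟨r + (k : ℕ), by have := k.isLt; omega⟩ :=
      Finset.sum_congr rfl fun k _ => rfl
    rw [Matrix.mul_apply, Matrix.sub_apply, Matrix.mul_apply, Matrix.one_apply, e2, e1]
    linarith
  have hVpL2 : Vp * Lam₂ * Vpᵀ = A - Ar := by
    ext a b
    have hs := sum_fin_split hrd (fun i => lam i * (v i a * v i b))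
    have e1 : (Vp * Lam₂ * Vpᵀ) a b
        = ∑ k : Fin (d - r), (fun i => lam i * (v i a * v i b))
            ⟨r + (k : ℕ), by have := k.isLt; omega⟩ := by
      rw [Matrix.mul_apply]
      refine Finset.sum_congr rfl fun k _ => ?_
      rw [hLam₂, Matrix.mul_diagonal, Matrix.transpose_apply]
      show Vp a k * lam _ * Vp b k = _
      simp only [hVp, Matrix.of_apply]
      ring
    have e2 : Ar a b
        = ∑ k : Fin r, (fun i => lam i * (v i a * v i b)) (Fin.castLE hrd k) := by
      show (∑ k : Fin r, lam (Fin.castLE hrd k) * v (Fin.castLE hrd k) a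
        * v (Fin.castLE hrd k) b) = _
      exact Finset.sum_congr rfl fun k _ => by ring
    rw [e1, Matrix.sub_apply, e2, hAdecomp a b]
    linarith
  have hL2' : Vp * (Lam₂ + Vpᵀ * E * Vp) * Vpᵀ
      = (A - Ar) + (1 - V * Vᵀ) * E * (1 - V * Vᵀ) := by
    rw [← hVpVp, ← hVpL2]
    simp only [Matrix.mul_add, Matrix.add_mul, Matrix.mul_assoc]
  -- coherence facts
  have hVcolsq : ∀ k : Fin r, ∑ a, (V a k)^2 = 1 := by
    intro k
    have h := hon (Fin.castLE hrd k) (Fin.castLE hrd k)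
    rw [if_pos rfl] at h
    calc ∑ a, (V a k)^2
        = ∑ a, v (Fin.castLE hrd k) a * v (Fin.castLE hrd k) a := by
          exact Finset.sum_congr rfl fun a _ => by rw [sq]; rfl
      _ = 1 := h
  have hmu0 : 0 ≤ mu := by
    rw [hmu]
    unfold matCoherence
    have h0 : (0:ℝ) ≤ ∑ j, (V ⟨0, hd⟩ j)^2 :=
      Finset.sum_nonneg fun j _ => sq_nonneg _
    have h1 : (0:ℝ) ≤ ⨆ i, ∑ j, (V i j)^2 :=
      le_trans h0 (fin_le_ciSup (fun i => ∑ j, (V i j)^2) ⟨0, hd⟩)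
    positivity
  have hS : ∀ a, ∑ k, (V a k)^2 ≤ r * mu / d := by
    intro a
    have h1 : ∑ k, (V a k)^2 ≤ ⨆ i, ∑ j, (V i j)^2 :=
      fin_le_ciSup (fun i => ∑ j, (V i j)^2) a
    have h2 : (⨆ i, ∑ j, (V i j)^2) = r * mu / d := by
      rw [hmu]; unfold matCoherence; field_simp
    linarith [h2 ▸ h1]
  have hmu1 : 1 ≤ mu := by
    have htot : ∑ a, ∑ k, (V a k)^2 = (r:ℝ) := by
      rw [Finset.sum_comm]
      simp [hVcolsq]
    have h1 : (r:ℝ) ≤ (r:ℝ) * mu := by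
      calc (r:ℝ) = ∑ a, ∑ k, (V a k)^2 := htot.symm
        _ ≤ ∑ _a : Fin d, ((r:ℝ) * mu / d) := Finset.sum_le_sum fun a _ => hS a
        _ = (d:ℝ) * ((r:ℝ) * mu / d) := by
            rw [Finset.sum_const, Finset.card_univ, Fintype.card_fin, nsmul_eq_mul]
        _ = (r:ℝ) * mu := by field_simp
    nlinarith
  have hr1 : (1:ℝ) ≤ r := by exact_mod_cast hr
  have hrmu1 : 1 ≤ (r:ℝ) * mu := by nlinarith
  -- norm facts
  have htrow : ∀ a, ∑ b, |E a b| ≤ tau := by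
    intro a; rw [htau]; exact fin_le_ciSup (fun i => ∑ j, |E i j|) a
  have ht0 : 0 ≤ tau :=
    le_trans (Finset.sum_nonneg fun b _ => abs_nonneg _) (htrow ⟨0, hd⟩)
  have herow : ∀ a, ∑ b, |(A - Ar) a b| ≤ eps := by
    intro a; rw [heps]; exact fin_le_ciSup (fun i => ∑ j, |(A - Ar) i j|) a
  have hEVb : ∀ a k, |(E * V) a k| ≤ mEV := by
    intro a k
    rw [hmEV]
    calc |(E * V) a k| ≤ ⨆ j, |(E * V) a j| := fin_le_ciSup (fun j => |(E * V) a j|) k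
      _ ≤ ⨆ i, ⨆ j, |(E * V) i j| := fin_le_ciSup (fun i => ⨆ j, |(E * V) i j|) a
  have hmEV0 : 0 ≤ mEV := le_trans (abs_nonneg _) (hEVb ⟨0, hd⟩ ⟨0, hr⟩)
  have hk0 : 0 ≤ kappa := by
    rw [hkappa]; exact mul_nonneg (Real.sqrt_nonneg _) hmEV0
  have hVcol1 : ∀ k, ∑ a, |V a k| ≤ Real.sqrt d := by
    intro k
    have h := Finset.sum_mul_sq_le_sq_mul_sq Finset.univ
      (fun a => |V a k|) (fun _ : Fin d => (1:ℝ))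
    simp only [mul_one, one_pow, sq_abs, Finset.sum_const, Finset.card_univ,
      Fintype.card_fin, nsmul_eq_mul] at h
    have h2 : (∑ a, |V a k|)^2 ≤ (d:ℝ) := by
      calc (∑ a, |V a k|)^2 ≤ (∑ a, (V a k)^2) * d := h
        _ = (d:ℝ) := by rw [hVcolsq k, one_mul]
    calc ∑ a, |V a k| = Real.sqrt ((∑ a, |V a k|)^2) :=
          (Real.sqrt_sq (Finset.sum_nonneg fun a _ => abs_nonneg _)).symm
      _ ≤ Real.sqrt d := Real.sqrt_le_sqrt h2
  have hVrow1 : ∀ a, ∑ k, |V a k| ≤ r * Real.sqrt (mu / d) := by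
    intro a
    have h := Finset.sum_mul_sq_le_sq_mul_sq Finset.univ
      (fun k : Fin r => (1:ℝ)) (fun k => |V a k|)
    simp only [one_mul, one_pow, sq_abs, Finset.sum_const, Finset.card_univ,
      Fintype.card_fin, nsmul_eq_mul, mul_one] at h
    have hrc : (0:ℝ) ≤ r * Real.sqrt (mu / d) :=
      mul_nonneg hr0.le (Real.sqrt_nonneg _)
    have h2 : (∑ k, |V a k|)^2 ≤ (r * Real.sqrt (mu / d))^2 := by
      have hq : (r * Real.sqrt (mu / d))^2 = r^2 * (mu / d) := by
        rw [mul_pow, Real.sq_sqrt (div_nonneg hmu0 hd0.le)]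
      rw [hq]
      calc (∑ k, |V a k|)^2 ≤ (r:ℝ) * ∑ k, (V a k)^2 := h
        _ ≤ (r:ℝ) * (r * mu / d) :=
            mul_le_mul_of_nonneg_left (hS a) hr0.le
        _ = r^2 * (mu / d) := by ring
    calc ∑ k, |V a k| = Real.sqrt ((∑ k, |V a k|)^2) :=
          (Real.sqrt_sq (Finset.sum_nonneg fun k _ => abs_nonneg _)).symm
      _ ≤ Real.sqrt ((r * Real.sqrt (mu / d))^2) := Real.sqrt_le_sqrt h2
      _ = r * Real.sqrt (mu / d) := Real.sqrt_sq hrc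
  have hProwsum : ∀ a, ∑ b, |(V * Vᵀ) a b| ≤ r * mu := by
    intro a
    have hent : ∀ b, |(V * Vᵀ) a b| ≤ r * mu / d := by
      intro b
      rw [Matrix.mul_apply]
      have hcs := Finset.sum_mul_sq_le_sq_mul_sq Finset.univ
        (fun k => V a k) (fun k => V b k)
      have h2 : (∑ k, V a k * Vᵀ k b)^2 ≤ (r * mu / d)^2 := by
        have e : ∑ k, V a k * Vᵀ k b = ∑ k, V a k * V b k :=
          Finset.sum_congr rfl fun k _ => rfl
        rw [e]
        calc (∑ k, V a k * V b k)^2 ≤ (∑ k, (V a k)^2) * ∑ k, (V b k)^2 := hcs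
          _ ≤ (r * mu / d) * (r * mu / d) := by
              have hb0 : (0:ℝ) ≤ ∑ k, (V b k)^2 :=
                Finset.sum_nonneg fun k _ => sq_nonneg _
              have ha0 : (0:ℝ) ≤ r * mu / d := by positivity
              exact mul_le_mul (hS a) (hS b) hb0 ha0
          _ = (r * mu / d)^2 := by ring
      have h3 : (0:ℝ) ≤ r * mu / d := by positivity
      calc |∑ k, V a k * Vᵀ k b| = Real.sqrt ((∑ k, V a k * Vᵀ k b)^2) :=
            (Real.sqrt_sq_eq_abs _).symm
        _ ≤ Real.sqrt ((r * mu / d)^2) := Real.sqrt_le_sqrt h2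
        _ = r * mu / d := Real.sqrt_sq h3
    calc ∑ b, |(V * Vᵀ) a b| ≤ ∑ _b : Fin d, (r * mu / d) :=
          Finset.sum_le_sum fun b _ => hent b
      _ = (d:ℝ) * (r * mu / d) := by
          rw [Finset.sum_const, Finset.card_univ, Fintype.card_fin, nsmul_eq_mul]
      _ = r * mu := by field_simp
  have hE11 : ∀ (k l : Fin r), |(Vᵀ * (E * V)) k l| ≤ kappa := by
    intro k l
    have e : (Vᵀ * (E * V)) k l = ∑ a, V a k * (E * V) a l := by
      rw [Matrix.mul_apply]
      exact Finset.sum_congr rfl fun a _ => rfl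
    rw [e, hkappa]
    exact rowsum_bound _ _ _ _ (hVcol1 k) (fun a => hEVb a l) hmEV0
  clear_value V Vp Lam₁ Lam₂ Ar tau eps mEV kappa mu W
  -- the two parts
  constructor
  · -- part 1
    intro Q₀ hQ
    have hQle : ∀ a b, |Q₀ a b| ≤ 1 := by
      intro a b
      have h1 : |Q₀ a b| ≤ ⨆ j, |Q₀ a j| := fin_le_ciSup (fun j => |Q₀ a j|) b
      have h2 : (⨆ j, |Q₀ a j|) ≤ ⨆ i, ⨆ j, |Q₀ i j| :=
        fin_le_ciSup (fun i => ⨆ j, |Q₀ i j|) a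
      calc |Q₀ a b| ≤ ⨆ j, |Q₀ a j| := h1
        _ ≤ matMaxNorm Q₀ := h2
        _ = 1 := hQ
    obtain ⟨i, hi⟩ := Finite.exists_max (fun i : Fin d => ⨆ j, |Q₀ i j|)
    obtain ⟨j, hj⟩ := Finite.exists_max (fun j : Fin r => |Q₀ i j|)
    have hij : |Q₀ i j| = 1 := by
      refine le_antisymm (hQle i j) ?_
      have h : matMaxNorm Q₀ ≤ |Q₀ i j| := by
        refine ciSup_le fun a => ?_
        calc (⨆ b, |Q₀ a b|) ≤ ⨆ b, |Q₀ i b| := hi a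
          _ ≤ |Q₀ i j| := ciSup_le hj
      rw [hQ] at h; exact h
    have hQrow : ∀ a, ∑ k : Fin r, |Q₀ a k| ≤ (r:ℝ) := fun a =>
      calc ∑ k : Fin r, |Q₀ a k| ≤ ∑ _k : Fin r, (1:ℝ) :=
            Finset.sum_le_sum fun k _ => hQle a k
        _ = (r:ℝ) := by simp
    have hsplit : Q₀ * (Lam₁ + Vᵀ * E * V) - Vp * (Lam₂ + Vpᵀ * E * Vp) * Vpᵀ * Q₀ =
        Q₀ * Lam₁ + Q₀ * (Vᵀ * (E * V)) - (A - Ar) * Q₀ - E * Q₀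
          + (V * Vᵀ) * (E * Q₀) + E * ((V * Vᵀ) * Q₀)
          - V * ((Vᵀ * (E * V)) * (Vᵀ * Q₀)) := by
      rw [hL2']
      simp only [Matrix.mul_add, Matrix.add_mul, Matrix.mul_sub, Matrix.sub_mul,
        Matrix.one_mul, Matrix.mul_one, Matrix.mul_assoc]
      abel
    -- entrywise bounds
    have hEQ : ∀ a j', |(E * Q₀) a j'| ≤ tau := by
      intro a j'
      rw [Matrix.mul_apply]
      have h := rowsum_bound (fun b => E a b) (fun b => Q₀ b j') tau 1
        (htrow a) (fun b => hQle b j') one_pos.le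
      simpa using h
    have hPQ : ∀ a j', |((V * Vᵀ) * Q₀) a j'| ≤ r * mu := by
      intro a j'
      rw [Matrix.mul_apply]
      have h := rowsum_bound (fun b => (V * Vᵀ) a b) (fun b => Q₀ b j') (r * mu) 1
        (hProwsum a) (fun b => hQle b j') one_pos.le
      simpa using h
    have hVtQ : ∀ (k : Fin r) j', |(Vᵀ * Q₀) k j'| ≤ Real.sqrt d := by
      intro k j'
      rw [Matrix.mul_apply]
      have h := rowsum_bound (fun a => Vᵀ k a) (fun a => Q₀ a j') (Real.sqrt d) 1
        (le_of_eq_of_le (Finset.sum_congr rfl fun a _ => rfl) (hVcol1 k))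
        (fun a => hQle a j') one_pos.le
      simpa using h
    have hE11row : ∀ l : Fin r, ∑ k, |(Vᵀ * (E * V)) l k| ≤ r * kappa := by
      intro l
      calc ∑ k : Fin r, |(Vᵀ * (E * V)) l k| ≤ ∑ _k : Fin r, kappa :=
            Finset.sum_le_sum fun k _ => hE11 l k
        _ = (r:ℝ) * kappa := by
            rw [Finset.sum_const, Finset.card_univ, Fintype.card_fin, nsmul_eq_mul]
    have hE11VQ : ∀ (l : Fin r) j',
        |((Vᵀ * (E * V)) * (Vᵀ * Q₀)) l j'| ≤ (r * kappa) * Real.sqrt d := by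
      intro l j'
      rw [Matrix.mul_apply]
      exact rowsum_bound _ _ _ _ (hE11row l) (fun k => hVtQ k j') (Real.sqrt_nonneg _)
    have hPEP : |(V * ((Vᵀ * (E * V)) * (Vᵀ * Q₀))) i j| ≤ r^2 * kappa * mu := by
      have h0 : (0:ℝ) ≤ (r * kappa) * Real.sqrt d := by positivity
      have h := rowsum_bound (fun k => V i k)
        (fun k => ((Vᵀ * (E * V)) * (Vᵀ * Q₀)) k j)
        (r * Real.sqrt (mu / d)) ((r * kappa) * Real.sqrt d)
        (hVrow1 i) (fun k => hE11VQ k j) h0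
      rw [Matrix.mul_apply]
      refine le_trans h ?_
      have hsq : Real.sqrt (mu / d) * Real.sqrt d = Real.sqrt mu := by
        rw [← Real.sqrt_mul (div_nonneg hmu0 hd0.le)]
        congr 1
        field_simp
      have hmusqrt : Real.sqrt mu ≤ mu := by
        have h1 : Real.sqrt mu ≤ Real.sqrt (mu^2) := Real.sqrt_le_sqrt (by nlinarith)
        rwa [Real.sqrt_sq hmu0] at h1
      calc (r * Real.sqrt (mu / d)) * ((r * kappa) * Real.sqrt d)
          = r^2 * kappa * (Real.sqrt (mu / d) * Real.sqrt d) := by ring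
        _ = r^2 * kappa * Real.sqrt mu := by rw [hsq]
        _ ≤ r^2 * kappa * mu := by nlinarith [sq_nonneg (r:ℝ), mul_nonneg (sq_nonneg (r:ℝ)) hk0]
    have hPEQ : |((V * Vᵀ) * (E * Q₀)) i j| ≤ (r * mu) * tau := by
      rw [Matrix.mul_apply]
      exact rowsum_bound _ _ _ _ (hProwsum i) (fun b => hEQ b j) ht0
    have hEPQ : |(E * ((V * Vᵀ) * Q₀)) i j| ≤ tau * (r * mu) := by
      rw [Matrix.mul_apply]
      exact rowsum_bound _ _ _ _ (htrow i) (fun b => hPQ b j)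
        (by positivity)
    have hArQ : |((A - Ar) * Q₀) i j| ≤ eps := by
      rw [Matrix.mul_apply]
      have h := rowsum_bound (fun b => (A - Ar) i b) (fun b => Q₀ b j) eps 1
        (herow i) (fun b => hQle b j) one_pos.le
      simpa using h
    have hQE11 : |(Q₀ * (Vᵀ * (E * V))) i j| ≤ (r:ℝ) * kappa := by
      rw [Matrix.mul_apply]
      exact rowsum_bound _ _ _ _ (hQrow i) (fun k => hE11 k j) hk0
    have hQL : (Q₀ * Lam₁) i j = Q₀ i j * lam (Fin.castLE hrd j) := by
      rw [hLam₁, Matrix.mul_diagonal]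
    set M := Q₀ * (Lam₁ + Vᵀ * E * V) - Vp * (Lam₂ + Vpᵀ * E * Vp) * Vpᵀ * Q₀ with hM
    have hXle : |M i j| ≤ matMaxNorm M := by
      calc |M i j| ≤ ⨆ b, |M i b| := fin_le_ciSup (fun b => |M i b|) j
        _ ≤ ⨆ a, ⨆ b, |M a b| := fin_le_ciSup (fun a => ⨆ b, |M a b|) i
    have hXeq : M i j = Q₀ i j * lam (Fin.castLE hrd j)
        + ((Q₀ * (Vᵀ * (E * V))) i j - ((A - Ar) * Q₀) i j - (E * Q₀) i j
          + ((V * Vᵀ) * (E * Q₀)) i j + (E * ((V * Vᵀ) * Q₀)) i j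
          - (V * ((Vᵀ * (E * V)) * (Vᵀ * Q₀))) i j) := by
      rw [hsplit]
      simp only [Matrix.add_apply, Matrix.sub_apply, hQL]
      ring
    have hlamj : |lam (Fin.castLE hrd ⟨r - 1, by omega⟩)| ≤ |lam (Fin.castLE hrd j)| := by
      apply hdec
      rw [Fin.le_def]
      simp only [Fin.coe_castLE]
      have := j.isLt
      omega
    have hRbound : |M i j - Q₀ i j * lam (Fin.castLE hrd j)|
        ≤ (r:ℝ) * kappa + eps + tau + (r * mu) * tau + tau * (r * mu)
          + r^2 * kappa * mu := by
      rw [hXeq]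
      have h1 := abs_le.mp hQE11
      have h2 := abs_le.mp hArQ
      have h3 := abs_le.mp (hEQ i j)
      have h4 := abs_le.mp hPEQ
      have h5 := abs_le.mp hEPQ
      have h6 := abs_le.mp hPEP
      rw [abs_le]
      constructor <;> [nlinarith; nlinarith]
    have habs : |Q₀ i j * lam (Fin.castLE hrd j)| = |lam (Fin.castLE hrd j)| := by
      rw [abs_mul, hij, one_mul]
    have htri := abs_sub_abs_le_abs_sub (Q₀ i j * lam (Fin.castLE hrd j)) (M i j)
    rw [habs] at htri
    have habs2 : |Q₀ i j * lam (Fin.castLE hrd j) - M i j|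
        = |M i j - Q₀ i j * lam (Fin.castLE hrd j)| := abs_sub_comm _ _
    rw [habs2] at htri
    have harith : (r:ℝ) * kappa + eps + tau + (r * mu) * tau + tau * (r * mu)
        + r^2 * kappa * mu ≤ 3 * r * mu * (tau + r * kappa) + eps := by
      nlinarith [mul_nonneg ht0 (sub_nonneg.mpr hrmu1),
        mul_nonneg (mul_nonneg hr0.le hk0) (sub_nonneg.mpr hrmu1),
        mul_nonneg (mul_nonneg hr0.le hk0) (mul_nonneg hr0.le (le_trans zero_le_one hmu1))]
    calc |lam (Fin.castLE hrd ⟨r - 1, by omega⟩)| - 3 * r * mu * (tau + r * kappa) - eps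
        ≤ |lam (Fin.castLE hrd j)|
          - ((r:ℝ) * kappa + eps + tau + (r * mu) * tau + tau * (r * mu)
            + r^2 * kappa * mu) := by linarith
      _ ≤ |M i j| := by linarith
      _ ≤ matMaxNorm M := hXle
  · -- part 2
    intro hcond
    rw [isUnit_iff_ne_zero]
    intro hdet
    obtain ⟨x, hx0, hLx⟩ := Matrix.exists_mulVec_eq_zero_iff.mpr hdet
    obtain ⟨k, hk⟩ := Finite.exists_max (fun l : Fin r => |x l|)
    have hxk : 0 < |x k| := by
      obtain ⟨l, hl⟩ := Function.ne_iff.mp hx0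
      exact lt_of_lt_of_le (abs_pos.mpr hl) (hk l)
    have hEnt := congrFun hLx k
    have heq : lam (Fin.castLE hrd k) * x k + ∑ l, (Vᵀ * (E * V)) k l * x l = 0 := by
      have h : ((Lam₁ + Vᵀ * E * V).mulVec x) k = 0 := hEnt
      rw [Matrix.add_mulVec, hLam₁] at h
      simp only [Pi.add_apply, Matrix.mulVec_diagonal] at h
      have h2 : ((Vᵀ * E * V).mulVec x) k = ∑ l, (Vᵀ * (E * V)) k l * x l := by
        rw [Matrix.mul_assoc]
        simp [Matrix.mulVec, dotProduct]
      rw [h2] at h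
      exact h
    have hbd : |lam (Fin.castLE hrd k)| * |x k| ≤ ((r:ℝ) * kappa) * |x k| := by
      have h1 : lam (Fin.castLE hrd k) * x k = -(∑ l, (Vᵀ * (E * V)) k l * x l) := by
        linarith
      calc |lam (Fin.castLE hrd k)| * |x k| = |lam (Fin.castLE hrd k) * x k| :=
            (abs_mul _ _).symm
        _ = |∑ l, (Vᵀ * (E * V)) k l * x l| := by rw [h1, abs_neg]
        _ ≤ ∑ l, |(Vᵀ * (E * V)) k l * x l| := Finset.abs_sum_le_sum_abs _ _
        _ = ∑ l, |(Vᵀ * (E * V)) k l| * |x l| := by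
            exact Finset.sum_congr rfl fun l _ => abs_mul _ _
        _ ≤ ∑ _l : Fin r, kappa * |x k| :=
            Finset.sum_le_sum fun l _ =>
              mul_le_mul (hE11 k l) (hk l) (abs_nonneg _) hk0
        _ = ((r:ℝ) * kappa) * |x k| := by
            rw [Finset.sum_const, Finset.card_univ, Fintype.card_fin, nsmul_eq_mul]
            ring
    have hlamk : |lam (Fin.castLE hrd ⟨r - 1, by omega⟩)| ≤ |lam (Fin.castLE hrd k)| := by
      apply hdec
      rw [Fin.le_def]
      simp only [Fin.coe_castLE]
      have := k.isLt
      omega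
    have hsqmu : 1 ≤ Real.sqrt mu := by
      have h1 : Real.sqrt 1 ≤ Real.sqrt mu := Real.sqrt_le_sqrt hmu1
      rwa [Real.sqrt_one] at h1
    have hlamle : |lam (Fin.castLE hrd k)| ≤ (r:ℝ) * kappa :=
      le_of_mul_le_mul_right hbd hxk
    nlinarith [mul_nonneg (mul_nonneg hk0 hr0.le) (sub_nonneg.mpr hsqmu)]
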